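/- Let d ∈ ℕ and Ω ⊂ ℝ^d open. If n ∈ W^{1,2}(Ω, S²) (i.e., n ∈ W^{1,2}(Ω, ℝ³) with |n| = 1 a.e.), then the polar angle θ(x) := arcsin(n₃(x)) belongs to W^{1,2}(Ω, [-π/2, π/2]). -/

import Mathlib

set_option maxHeartbeats 2000000

open Real Set MeasureTheory

lemma esq (u : EuclideanSpace ℝ (Fin 3)) : ‖u‖ ^ 2 = u 0 ^ 2 + u 1 ^ 2 + u 2 ^ 2 := by
  rw [EuclideanSpace.norm_eq, Real.sq_sqrt (by positivity)]
  simp [Fin.sum_univ_three, sq_abs]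

lemma key (u v : EuclideanSpace ℝ (Fin 3)) (hu : ‖u‖ = 1) (hv : ‖v‖ = 1) :
    |arcsin (u 2) - arcsin (v 2)| ≤ π / 2 * ‖u - v‖ := by
  have hu2 : u 0 ^ 2 + u 1 ^ 2 + u 2 ^ 2 = 1 := by rw [← esq, hu]; norm_num
  have hv2 : v 0 ^ 2 + v 1 ^ 2 + v 2 ^ 2 = 1 := by rw [← esq, hv]; norm_num
  have hu1 : -1 ≤ u 2 ∧ u 2 ≤ 1 := abs_le.mp (by nlinarith [sq_nonneg (u 0), sq_nonneg (u 1), sq_abs (u 2), abs_nonneg (u 2)])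
  have hv1 : -1 ≤ v 2 ∧ v 2 ≤ 1 := abs_le.mp (by nlinarith [sq_nonneg (v 0), sq_nonneg (v 1), sq_abs (v 2), abs_nonneg (v 2)])
  set a := arcsin (u 2) with ha
  set b := arcsin (v 2) with hb
  have hsa : sin a = u 2 := sin_arcsin hu1.1 hu1.2
  have hsb : sin b = v 2 := sin_arcsin hv1.1 hv1.2
  have hca : cos a ^ 2 = u 0 ^ 2 + u 1 ^ 2 := by
    have := sin_sq_add_cos_sq a; nlinarith
  have hcb : cos b ^ 2 = v 0 ^ 2 + v 1 ^ 2 := by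
    have := sin_sq_add_cos_sq b; nlinarith
  have hca0 : 0 ≤ cos a := cos_arcsin_nonneg _
  have hcb0 : 0 ≤ cos b := cos_arcsin_nonneg _
  -- Cauchy-Schwarz in the horizontal plane
  have hcs : u 0 * v 0 + u 1 * v 1 ≤ cos a * cos b := by
    nlinarith [sq_nonneg (u 0 * v 1 - u 1 * v 0), mul_nonneg hca0 hcb0,
      sq_nonneg (u 0 * v 0 + u 1 * v 1 - cos a * cos b), sq_nonneg (u 0 * v 0 + u 1 * v 1 + cos a * cos b)]
  have hnsq : ‖u - v‖ ^ 2 = (u 0 - v 0) ^ 2 + (u 1 - v 1) ^ 2 + (u 2 - v 2) ^ 2 := by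
    rw [esq]; simp [PiLp.sub_apply]
  have h2 : (cos a - cos b) ^ 2 + (sin a - sin b) ^ 2 ≤ ‖u - v‖ ^ 2 := by
    rw [hnsq, hsa, hsb]; nlinarith [hcs, hca, hcb]
  have h3 : (cos a - cos b) ^ 2 + (sin a - sin b) ^ 2 = 4 * sin ((a - b) / 2) ^ 2 := by
    have h4 := Real.sin_sq_eq_half_sub ((a - b) / 2)
    have he : 2 * ((a - b) / 2) = a - b := by ring
    rw [he, Real.cos_sub] at h4
    have := sin_sq_add_cos_sq a
    have := sin_sq_add_cos_sq b
    nlinarith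
  have hab : |(a - b) / 2| ≤ π / 2 := by
    have h1 := arcsin_mem_Icc (u 2)
    have h2 := arcsin_mem_Icc (v 2)
    simp only [mem_Icc] at h1 h2
    rw [abs_le]; constructor <;> [linarith [h1.1, h2.2]; linarith [h1.2, h2.1]]
  have hj : 2 / π * |(a - b) / 2| ≤ |sin ((a - b) / 2)| := mul_abs_le_abs_sin hab
  have hsq : (a - b) ^ 2 ≤ (π / 2 * ‖u - v‖) ^ 2 := by
    have hπ := pi_pos
    have hπ2 : (0:ℝ) < π ^ 2 := by positivity
    have h5 : (2 / π * |(a - b) / 2|) ^ 2 ≤ sin ((a - b) / 2) ^ 2 := by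
      rw [← sq_abs (sin _)]
      exact pow_le_pow_left₀ (by positivity) hj 2
    rw [mul_pow, sq_abs] at h5
    have h6 : (a - b) ^ 2 ≤ π ^ 2 * sin ((a - b) / 2) ^ 2 := by
      calc (a - b) ^ 2 = π ^ 2 * ((2 / π) ^ 2 * ((a - b) / 2) ^ 2) := by field_simp
      _ ≤ _ := mul_le_mul_of_nonneg_left h5 (le_of_lt hπ2)
    have h7 : 4 * sin ((a - b) / 2) ^ 2 ≤ ‖u - v‖ ^ 2 := by rw [← h3]; exact h2
    nlinarith [h6, mul_le_mul_of_nonneg_left h7 (sq_nonneg π)]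
  calc |a - b| = √((a - b) ^ 2) := (Real.sqrt_sq_eq_abs _).symm
    _ ≤ √((π / 2 * ‖u - v‖) ^ 2) := Real.sqrt_le_sqrt hsq
    _ = π / 2 * ‖u - v‖ := Real.sqrt_sq (by positivity)

lemma abs_arcsin_le' (t : ℝ) : |arcsin t| ≤ π / 2 * |t| := by
  have hπ := pi_pos
  have hI := arcsin_mem_Icc t
  simp only [mem_Icc] at hI
  have habs : |arcsin t| ≤ π / 2 := abs_le.mpr hI
  rcases le_total (|t|) 1 with h | h
  · have h1 := abs_le.mp h
    have hs : sin (arcsin t) = t := sin_arcsin h1.1 h1.2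
    have hj := mul_abs_le_abs_sin (x := arcsin t) habs
    rw [hs] at hj
    calc |arcsin t| = π / 2 * (2 / π * |arcsin t|) := by field_simp
      _ ≤ π / 2 * |t| := mul_le_mul_of_nonneg_left hj (by positivity)
  · nlinarith [abs_nonneg (arcsin t)]

lemma coord_le_norm (u : EuclideanSpace ℝ (Fin 3)) : |u 2| ≤ ‖u‖ := by
  have h : |u 2| ^ 2 ≤ ‖u‖ ^ 2 := by
    rw [esq, sq_abs]; nlinarith [sq_nonneg (u 0), sq_nonneg (u 1)]
  calc |u 2| = √(|u 2| ^ 2) := (Real.sqrt_sq (abs_nonneg _)).symm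
    _ ≤ √(‖u‖ ^ 2) := Real.sqrt_le_sqrt h
    _ = ‖u‖ := Real.sqrt_sq (norm_nonneg _)

/-- A formalisation of membership in `W^{1,2}(Ω, F)`: the function is in `L²(Ω)` and its
translates satisfy a uniform difference-quotient bound in `L²` on compactly contained
subsets (the difference-quotient characterisation of `W^{1,2}`). -/
def MemW12 {d : ℕ} {F : Type*} [NormedAddCommGroup F] (Ω : Set (Fin d → ℝ))
    (f : (Fin d → ℝ) → F) : Prop :=
  MeasureTheory.MemLp f 2 (MeasureTheory.volume.restrict Ω) ∧
  ∃ C : ℝ, ∀ Ω' : Set (Fin d → ℝ), IsCompact (closure Ω') → closure Ω' ⊆ Ω →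
    ∀ (j : Fin d) (h : ℝ), (∀ x ∈ Ω', x + h • (Pi.single j 1 : Fin d → ℝ) ∈ Ω) →
      (∫ x in Ω', ‖f (x + h • (Pi.single j 1 : Fin d → ℝ)) - f x‖ ^ 2) ≤ C * h ^ 2

theorem polar_angle_regularity (d : ℕ) (Ω : Set (Fin d → ℝ)) (hΩ : IsOpen Ω)
    (n : (Fin d → ℝ) → EuclideanSpace ℝ (Fin 3))
    (hunit : ∀ᵐ x ∂(MeasureTheory.volume.restrict Ω), ‖n x‖ = 1)
    (hn : MemW12 Ω n) :
    MemW12 Ω (fun x => Real.arcsin (n x 2)) ∧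
    ∀ x, Real.arcsin (n x 2) ∈ Set.Icc (-(π / 2)) (π / 2) := by
  refine ⟨⟨?_, ?_⟩, fun x => arcsin_mem_Icc _⟩
  · -- Memℒp of the angle
    have hcont : Continuous fun y : EuclideanSpace ℝ (Fin 3) => arcsin (y 2) :=
      Real.continuous_arcsin.comp ((continuous_apply (2 : Fin 3)).comp
        (PiLp.continuous_ofLp 2 fun _ : Fin 3 => ℝ))
    have hmeas : AEStronglyMeasurable (fun x => arcsin (n x 2)) (volume.restrict Ω) :=
      hcont.comp_aestronglyMeasurable hn.1.1
    refine hn.1.of_le_mul (c := π / 2) hmeas (Filter.Eventually.of_forall fun x => ?_)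
    calc ‖arcsin (n x 2)‖ = |arcsin (n x 2)| := Real.norm_eq_abs _
      _ ≤ π / 2 * |n x 2| := abs_arcsin_le' _
      _ ≤ π / 2 * ‖n x‖ := by
          have := coord_le_norm (n x)
          nlinarith [pi_pos]
  · obtain ⟨C, hC⟩ := hn.2
    refine ⟨(π / 2) ^ 2 * C, fun Ω' hΩ'c hΩ'sub j h hmove => ?_⟩
    set v := h • (Pi.single j 1 : Fin d → ℝ) with hv
    have hTmeas : Measurable fun x : Fin d → ℝ => x + v := measurable_add_const v
    have hle : (volume.restrict Ω').map (· + v) ≤ volume.restrict Ω := by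
      rw [Measure.le_iff]
      intro s hs
      rw [Measure.map_apply hTmeas hs, Measure.restrict_apply (hTmeas hs), Measure.restrict_apply hs]
      calc volume ((· + v) ⁻¹' s ∩ Ω') ≤ volume ((· + v) ⁻¹' (s ∩ Ω)) :=
            measure_mono fun x hx => ⟨hx.1, hmove x hx.2⟩
        _ = volume (s ∩ Ω) := measure_preimage_add_right volume v _
    have hleΩ' : volume.restrict Ω' ≤ volume.restrict Ω := Measure.restrict_mono (subset_closure.trans hΩ'sub) le_rfl
    have hnmap : AEStronglyMeasurable n ((volume.restrict Ω').map (· + v)) :=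
      hn.1.1.mono_measure hle
    have hnT : AEStronglyMeasurable (fun x => n (x + v)) (volume.restrict Ω') :=
      hnmap.comp_measurable hTmeas
    have hn' : AEStronglyMeasurable n (volume.restrict Ω') := hn.1.1.mono_measure hleΩ'
    have hunitT : ∀ᵐ x ∂(volume.restrict Ω'), ‖n (x + v)‖ = 1 :=
      ae_of_ae_map hTmeas.aemeasurable (hunit.filter_mono (MeasureTheory.ae_mono hle))
    have hunit' : ∀ᵐ x ∂(volume.restrict Ω'), ‖n x‖ = 1 :=
      hunit.filter_mono (MeasureTheory.ae_mono hleΩ')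
    have hmemT : MemLp (fun x => n (x + v)) 2 (volume.restrict Ω') := by
      refine ⟨hnT, ?_⟩
      have heq := eLpNorm_map_measure (p := 2) hnmap hTmeas.aemeasurable
      calc eLpNorm (fun x => n (x + v)) 2 (volume.restrict Ω')
          = eLpNorm n 2 ((volume.restrict Ω').map (· + v)) := heq.symm
        _ ≤ eLpNorm n 2 (volume.restrict Ω) := eLpNorm_mono_measure n hle
        _ < ⊤ := hn.1.2
    have hmem' : MemLp n 2 (volume.restrict Ω') := hn.1.mono_measure hleΩ'
    have hint : Integrable (fun x => ‖n (x + v) - n x‖ ^ 2) (volume.restrict Ω') :=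
      ((hmemT.sub hmem').norm).integrable_sq
    have hbound : ∀ᵐ x ∂(volume.restrict Ω'),
        ‖arcsin (n (x + v) 2) - arcsin (n x 2)‖ ^ 2 ≤ (π / 2) ^ 2 * ‖n (x + v) - n x‖ ^ 2 := by
      filter_upwards [hunitT, hunit'] with x h1 h2
      have hk := key (n (x + v)) (n x) h1 h2
      rw [Real.norm_eq_abs]
      calc |arcsin (n (x + v) 2) - arcsin (n x 2)| ^ 2
          ≤ (π / 2 * ‖n (x + v) - n x‖) ^ 2 := pow_le_pow_left₀ (abs_nonneg _) hk 2
        _ = (π / 2) ^ 2 * ‖n (x + v) - n x‖ ^ 2 := by ring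
    calc (∫ x in Ω', ‖arcsin (n (x + v) 2) - arcsin (n x 2)‖ ^ 2)
        ≤ ∫ x in Ω', (π / 2) ^ 2 * ‖n (x + v) - n x‖ ^ 2 :=
          integral_mono_of_nonneg (Filter.Eventually.of_forall fun x => by positivity)
            (hint.const_mul _) hbound
      _ = (π / 2) ^ 2 * ∫ x in Ω', ‖n (x + v) - n x‖ ^ 2 := integral_const_mul _ _
      _ ≤ (π / 2) ^ 2 * (C * h ^ 2) :=
          mul_le_mul_of_nonneg_left (hC Ω' hΩ'c hΩ'sub j h hmove) (by positivity)
      _ = (π / 2) ^ 2 * C * h ^ 2 := by ring
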